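/- Let f_LS : ℝ → ℝ be defined by f_LS(z) = −(z − 1)² + 1. Let k ≥ 1, let x₁, …, x_k be i.i.d. real-valued random variables with distribution P, and let y₁, …, y_k be i.i.d. real-valued random variables with distribution Q, with all 2k variables mutually independent. Let C : ℝ → ℝ be measurable with C square-integrable under both P and Q, and write μ_x = E[C(x₁)] and σ_x² = Var[C(x₁)]. Then E[ (1/k)·Σ_{j=1}^k f_LS( (1/k)·Σ_{i=1}^k C(x_i) − C(y_j) ) ] = E_{y ∼ Q}[ f_LS( μ_x − C(y) ) ] − σ_x²/k. -/

import Mathlib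

open MeasureTheory ProbabilityTheory

/-- The least-squares GAN loss. -/
noncomputable def fLS (z : ℝ) : ℝ := -(z - 1)^2 + 1

/-- The mini-batch RaLSGAN estimator of the second term has expectation equal to the
population term minus `σ_x² / k` (finite-sample bias `-σ_x²/k`). -/
theorem raLSGAN_second_term_bias
    {Ω : Type*} [MeasurableSpace Ω] (μ : Measure Ω) [IsProbabilityMeasure μ]
    (P Q : Measure ℝ) [IsProbabilityMeasure P] [IsProbabilityMeasure Q]
    (k : ℕ) (hk : 1 ≤ k)
    (x y : Fin k → Ω → ℝ)
    (hxm : ∀ i, Measurable (x i)) (hym : ∀ j, Measurable (y j))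
    (hx_law : ∀ i, μ.map (x i) = P) (hy_law : ∀ j, μ.map (y j) = Q)
    (hindep : iIndepFun (Sum.elim x y) μ)
    (C : ℝ → ℝ) (hCm : Measurable C)
    (hC2P : MemLp C 2 P) (hC2Q : MemLp C 2 Q)
    (μx σx2 : ℝ)
    (hμx : μx = ∫ z, C z ∂P)
    (hσx2 : σx2 = ∫ z, (C z - μx)^2 ∂P) :
    ∫ ω, (1 / (k : ℝ)) * ∑ j : Fin k,
        fLS ((1 / (k : ℝ)) * (∑ i : Fin k, C (x i ω)) - C (y j ω)) ∂μ
      = (∫ z, fLS (μx - C z) ∂Q) - σx2 / k := by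
  classical
  have hk0 : (k : ℝ) ≠ 0 := Nat.cast_ne_zero.mpr (by omega)
  set X : Fin k → Ω → ℝ := fun i ω => C (x i ω) with hXdef
  set Y : Fin k → Ω → ℝ := fun j ω => C (y j ω) with hYdef
  have hXm : ∀ i, Measurable (X i) := fun i => hCm.comp (hxm i)
  have hYm : ∀ j, Measurable (Y j) := fun j => hCm.comp (hym j)
  -- moments of X i
  have hXmem : ∀ i, MemLp (X i) 2 μ := fun i => by
    have h := hC2P; rw [← hx_law i] at h
    exact (memLp_map_measure_iff hCm.aestronglyMeasurable (hxm i).aemeasurable).mp h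
  have hYmem : ∀ j, MemLp (Y j) 2 μ := fun j => by
    have h := hC2Q; rw [← hy_law j] at h
    exact (memLp_map_measure_iff hCm.aestronglyMeasurable (hym j).aemeasurable).mp h
  have hEX : ∀ i, ∫ ω, X i ω ∂μ = μx := fun i => by
    rw [hμx, ← hx_law i, integral_map (hxm i).aemeasurable hCm.aestronglyMeasurable]
  have hEX2 : ∀ i, ∫ ω, (X i ω)^2 ∂μ = ∫ z, (C z)^2 ∂P := fun i => by
    rw [← hx_law i, integral_map (hxm i).aemeasurable
      ((hCm.pow_const 2).aestronglyMeasurable)]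
  set ν : ℝ := ∫ z, C z ∂Q with hνdef
  set q2 : ℝ := ∫ z, (C z)^2 ∂Q with hq2def
  have hEY : ∀ j, ∫ ω, Y j ω ∂μ = ν := fun j => by
    rw [hνdef, ← hy_law j, integral_map (hym j).aemeasurable hCm.aestronglyMeasurable]
  have hEY2 : ∀ j, ∫ ω, (Y j ω)^2 ∂μ = q2 := fun j => by
    rw [hq2def, ← hy_law j, integral_map (hym j).aemeasurable
      ((hCm.pow_const 2).aestronglyMeasurable)]
  -- σx2 alternative form
  have hCPint : Integrable C P := hC2P.integrable one_le_two
  have hCPsq : Integrable (fun z => (C z)^2) P := hC2P.integrable_sq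
  have hσ' : σx2 = (∫ z, (C z)^2 ∂P) - μx^2 := by
    rw [hσx2]
    have hpt : ∀ z, (C z - μx)^2 = (C z ^ 2 - 2 * μx * C z) + μx^2 := fun z => by ring
    simp_rw [hpt]
    have h1 : Integrable (fun z => C z ^ 2 - 2 * μx * C z) P :=
      hCPsq.sub (hCPint.const_mul (2*μx))
    rw [integral_add h1 (integrable_const _),
      integral_sub hCPsq (hCPint.const_mul (2*μx)), integral_const_mul, integral_const]
    simp only [measure_univ, probReal_univ, ENNReal.toReal_one, smul_eq_mul, one_mul, ← hμx]
    ring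
  -- variance of each X i
  have hVX : ∀ i, variance (X i) μ = σx2 := fun i => by
    rw [variance_eq_sub (hXmem i)]
    have h2 : (∫ ω, (X i ^ 2) ω ∂μ) = ∫ z, (C z)^2 ∂P := by
      simp only [Pi.pow_apply]; exact hEX2 i
    rw [show μ[X i ^ 2] = ∫ z, (C z)^2 ∂P from h2,
      show μ[X i] = μx from hEX i, hσ']
  -- the composed independent family
  set XY : Fin k ⊕ Fin k → Ω → ℝ := Sum.elim X Y with hXYdef
  have hXYm : ∀ s, Measurable (XY s) := by rintro (i | j); exacts [hXm i, hYm j]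
  have hIc : iIndepFun XY μ := by
    have h := hindep.comp (fun _ => C) (fun _ => hCm)
    have he : XY = fun s => C ∘ Sum.elim x y s := by
      funext s; cases s <;> rfl
    rw [he]; exact h
  have hXpair : ∀ i j : Fin k, i ≠ j → IndepFun (X i) (X j) μ := fun i j hij =>
    hIc.indepFun (show (Sum.inl i : Fin k ⊕ Fin k) ≠ Sum.inl j by simpa using hij)
  -- the sum T and the average S
  set T : Ω → ℝ := fun ω => ∑ i, X i ω with hTdef
  have hTsum : T = ∑ i : Fin k, X i := by
    funext ω; simp [hTdef, Finset.sum_apply]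
  have hTmem : MemLp T 2 μ := by
    rw [hTsum]; exact memLp_finset_sum' _ fun i _ => hXmem i
  have hVT : variance T μ = k * σx2 := by
    rw [hTsum, IndepFun.variance_sum (fun i _ => hXmem i)
      (fun i _ j _ hij => hXpair i j hij)]
    simp [hVX, Finset.sum_const, Finset.card_univ, nsmul_eq_mul]
  have hET : ∫ ω, T ω ∂μ = k * μx := by
    rw [show (fun ω => T ω) = fun ω => ∑ i, X i ω from rfl,
      integral_finset_sum _ (fun i _ => (hXmem i).integrable one_le_two)]
    simp [hEX, Finset.sum_const, Finset.card_univ, nsmul_eq_mul]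
  set S : Ω → ℝ := fun ω => (1/(k:ℝ)) * T ω with hSdef
  have hSmem : MemLp S 2 μ := hTmem.const_mul _
  have hES : ∫ ω, S ω ∂μ = μx := by
    rw [hSdef]
    simp only [integral_const_mul, hET]
    field_simp
  have hVS : variance S μ = σx2 / k := by
    rw [hSdef, variance_const_mul, hVT]
    field_simp
  have hES2 : ∫ ω, (S ω)^2 ∂μ = μx^2 + σx2/k := by
    have hv := variance_eq_sub hSmem
    have h2 : μ[S ^ 2] = ∫ ω, (S ω)^2 ∂μ := by simp only [Pi.pow_apply]
    rw [h2, show μ[S] = μx from hES, hVS] at hv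
    linarith
  -- independence of S and Y j
  have hTY : ∀ j, IndepFun T (Y j) μ := fun j => by
    have h := hIc.indepFun_finset_sum_of_notMem hXYm
      (s := Finset.univ.image Sum.inl) (i := Sum.inr j) (by simp)
    have hsum : (∑ s ∈ Finset.univ.image Sum.inl, XY s) = T := by
      rw [Finset.sum_image (fun a _ b _ h => Sum.inl.inj h), hTsum]
      rfl
    rwa [hsum] at h
  have hSY : ∀ j, IndepFun S (Y j) μ := fun j => by
    have h := (hTY j).comp (measurable_id.const_mul (1/(k:ℝ))) measurable_id
    exact h
  have hYint : ∀ j, Integrable (Y j) μ := fun j => (hYmem j).integrable one_le_two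
  have hSint : Integrable S μ := hSmem.integrable one_le_two
  have hSYint : ∀ j, Integrable (fun ω => S ω * Y j ω) μ := fun j =>
    (hSY j).integrable_mul hSint (hYint j)
  have hESY : ∀ j, ∫ ω, S ω * Y j ω ∂μ = μx * ν := fun j => by
    have h := (hSY j).integral_mul_eq_mul_integral hSint.aestronglyMeasurable (hYint j).aestronglyMeasurable
    have h' : (∫ ω, S ω * Y j ω ∂μ) = integral μ (S * Y j) := rfl
    rw [h', h, show integral μ S = μx from hES, show integral μ (Y j) = ν from hEY j]
  -- the population term
  have hCQint : Integrable C Q := hC2Q.integrable one_le_two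
  have hCQsq : Integrable (fun z => (C z)^2) Q := hC2Q.integrable_sq
  have hI : (∫ z, fLS (μx - C z) ∂Q)
      = -(μx^2) + 2*(μx*ν) - q2 + 2*μx - 2*ν := by
    have hpt : ∀ z, fLS (μx - C z)
        = ((-(μx^2) + 2*μx + (2*μx - 2) * C z) - C z ^ 2) := fun z => by
      simp only [fLS]; ring
    simp_rw [hpt]
    have h1 : Integrable (fun z => -(μx^2) + 2*μx + (2*μx - 2) * C z) Q :=
      (integrable_const _).add (hCQint.const_mul _)
    rw [integral_sub h1 hCQsq, integral_add (integrable_const _) (hCQint.const_mul _),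
      integral_const_mul, integral_const]
    simp only [measure_univ, probReal_univ, ENNReal.toReal_one, smul_eq_mul, one_mul, ← hνdef, ← hq2def]
    ring
  -- the key per-sample identity
  have key : ∀ j : Fin k, Integrable (fun ω => fLS (S ω - Y j ω)) μ ∧
      ∫ ω, fLS (S ω - Y j ω) ∂μ = (∫ z, fLS (μx - C z) ∂Q) - σx2/k := by
    intro j
    have hfun : (fun ω => fLS (S ω - Y j ω))
        = fun ω => ((2 * (S ω * Y j ω) + 2 * S ω) - ((S ω ^ 2 + Y j ω ^ 2) + 2 * Y j ω)) := by
      funext ω; simp only [fLS]; ring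
    have hS2int : Integrable (fun ω => S ω ^ 2) μ := hSmem.integrable_sq
    have hY2int : Integrable (fun ω => Y j ω ^ 2) μ := (hYmem j).integrable_sq
    have h1 : Integrable (fun ω => 2 * (S ω * Y j ω) + 2 * S ω) μ :=
      ((hSYint j).const_mul 2).add (hSint.const_mul 2)
    have h3 : Integrable (fun ω => S ω ^ 2 + Y j ω ^ 2) μ := hS2int.add hY2int
    have h2 : Integrable (fun ω => (S ω ^ 2 + Y j ω ^ 2) + 2 * Y j ω) μ :=
      h3.add ((hYint j).const_mul 2)
    have hint : Integrable (fun ω => fLS (S ω - Y j ω)) μ := by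
      rw [hfun]; exact h1.sub h2
    refine ⟨hint, ?_⟩
    rw [hfun, integral_sub h1 h2,
      integral_add ((hSYint j).const_mul 2) (hSint.const_mul 2),
      integral_add h3 ((hYint j).const_mul 2),
      integral_add hS2int hY2int,
      integral_const_mul, integral_const_mul, integral_const_mul,
      hES2, hESY j, hEY2 j]
    rw [hET, integral_const_mul, hEY j, hI]
    field_simp
    ring
  -- conclusion
  have hmain : ∫ ω, (1/(k:ℝ)) * ∑ j : Fin k, fLS (S ω - Y j ω) ∂μ
      = (∫ z, fLS (μx - C z) ∂Q) - σx2 / k := by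
    rw [integral_const_mul, integral_finset_sum _ (fun j _ => (key j).1)]
    have hc : ∀ j : Fin k, j ∈ Finset.univ →
        (∫ ω, fLS (S ω - Y j ω) ∂μ) = (∫ z, fLS (μx - C z) ∂Q) - σx2/k :=
      fun j _ => (key j).2
    rw [Finset.sum_congr rfl hc, Finset.sum_const, Finset.card_univ, Fintype.card_fin,
      nsmul_eq_mul]
    field_simp
  exact hmain
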